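/- (Banach's theorem on symmetric tensors.) Let n ≥ 1 and d ≥ 1 be integers and let S : (Fin d → Fin n) → ℂ be symmetric. Then sSup{ |Σ_{i : Fin d → Fin n} S(i) ∏_{k} x^{(k)}(i(k))| : x^{(1)},…,x^{(d)} ∈ ℂⁿ with ‖x^{(k)}‖ = 1 for all k } = sSup{ |Σ_{i : Fin d → Fin n} S(i) ∏_{k} y(i(k))| : y ∈ ℂⁿ, ‖y‖ = 1 }; that is, the spectral norm of a symmetric tensor is attained on rank-one symmetric tensors. -/

import Mathlib

open Finset

namespace Stmt8

variable {n d : ℕ}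

noncomputable def nrm2 (y : Fin n → ℂ) : ℝ := ∑ l, Complex.normSq (y l)

noncomputable def ip (a b : Fin n → ℂ) : ℂ := ∑ l, a l * (starRingEnd ℂ) (b l)

noncomputable def scal (c : ℂ) (a : Fin n → ℂ) : Fin n → ℂ := fun l => c * a l

lemma nrm2_nonneg (y : Fin n → ℂ) : 0 ≤ nrm2 y :=
  Finset.sum_nonneg fun _ _ => Complex.normSq_nonneg _

lemma nrm2_eq_sum_abs (y : Fin n → ℂ) : nrm2 y = ∑ l, ‖y l‖ ^ 2 := by
  simp [nrm2, Complex.sq_norm]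

lemma ip_self (a : Fin n → ℂ) : ip a a = ((nrm2 a : ℝ) : ℂ) := by
  rw [ip, nrm2, Complex.ofReal_sum]
  exact Finset.sum_congr rfl fun l _ => (Complex.mul_conj _)

lemma ip_comm (a b : Fin n → ℂ) : ip a b = (starRingEnd ℂ) (ip b a) := by
  rw [ip, ip, map_sum]
  exact Finset.sum_congr rfl fun l _ => by rw [map_mul, Complex.conj_conj]; ring

lemma normSq_ip_comm (a b : Fin n → ℂ) :
    Complex.normSq (ip a b) = Complex.normSq (ip b a) := by
  rw [ip_comm, Complex.normSq_conj]

lemma ip_add_left (a b c : Fin n → ℂ) : ip (a + b) c = ip a c + ip b c := by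
  rw [ip, ip, ip, ← Finset.sum_add_distrib]
  exact Finset.sum_congr rfl fun l _ => by simp [Pi.add_apply]; ring

lemma ip_scal_left (μ : ℂ) (a b : Fin n → ℂ) : ip (scal μ a) b = μ * ip a b := by
  rw [ip, ip, Finset.mul_sum]
  exact Finset.sum_congr rfl fun l _ => by simp [scal]; ring

lemma ip_scal_right (μ : ℂ) (a b : Fin n → ℂ) :
    ip a (scal μ b) = (starRingEnd ℂ) μ * ip a b := by
  rw [ip, ip, Finset.mul_sum]
  exact Finset.sum_congr rfl fun l _ => by simp [scal, map_mul]; ring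

lemma ip_sub_left (a b c : Fin n → ℂ) : ip (a - b) c = ip a c - ip b c := by
  rw [ip, ip, ip, ← Finset.sum_sub_distrib]
  exact Finset.sum_congr rfl fun l _ => by simp [Pi.sub_apply]; ring

lemma ip_sub_right (a b c : Fin n → ℂ) : ip a (b - c) = ip a b - ip a c := by
  rw [ip, ip, ip, ← Finset.sum_sub_distrib]
  exact Finset.sum_congr rfl fun l _ => by simp [Pi.sub_apply, map_sub]; ring

lemma nrm2_scal (μ : ℂ) (a : Fin n → ℂ) :
    nrm2 (scal μ a) = Complex.normSq μ * nrm2 a := by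
  rw [nrm2, nrm2, Finset.mul_sum]
  exact Finset.sum_congr rfl fun l _ => by simp [scal, Complex.normSq_mul]

lemma nrm2_eq_re_ip (a : Fin n → ℂ) : nrm2 a = (ip a a).re := by
  rw [ip_self]; simp

private lemma normSq_add' (z w : ℂ) :
    Complex.normSq (z + w) = Complex.normSq z + Complex.normSq w + 2 * (z * (starRingEnd ℂ) w).re := by
  simp [Complex.normSq_apply, Complex.mul_re]; ring

private lemma normSq_sub' (z w : ℂ) :
    Complex.normSq (z - w) = Complex.normSq z + Complex.normSq w - 2 * (z * (starRingEnd ℂ) w).re := by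
  simp [Complex.normSq_apply, Complex.mul_re]; ring

lemma sq_par (z w : ℂ) :
    Complex.normSq (z + w) + Complex.normSq (z - w)
      = 2 * Complex.normSq z + 2 * Complex.normSq w := by
  simp [Complex.normSq_apply]; ring

lemma nrm2_add (a b : Fin n → ℂ) : nrm2 (a + b) = nrm2 a + nrm2 b + 2 * (ip a b).re := by
  rw [nrm2, nrm2, nrm2, ip, Complex.re_sum]
  simp_rw [Pi.add_apply, normSq_add']
  rw [Finset.sum_add_distrib, Finset.sum_add_distrib, ← Finset.mul_sum]

lemma nrm2_sub (a b : Fin n → ℂ) : nrm2 (a - b) = nrm2 a + nrm2 b - 2 * (ip a b).re := by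
  rw [nrm2, nrm2, nrm2, ip, Complex.re_sum]
  simp_rw [Pi.sub_apply, normSq_sub']
  rw [Finset.sum_sub_distrib, Finset.sum_add_distrib, ← Finset.mul_sum]

lemma nrm2_zero_iff {a : Fin n → ℂ} (h : nrm2 a = 0) : a = 0 := by
  funext l
  have := (Finset.sum_eq_zero_iff_of_nonneg (fun i _ => Complex.normSq_nonneg (a i))).mp h l (mem_univ l)
  simpa [Complex.normSq_eq_zero] using this

lemma cs {a b : Fin n → ℂ} (ha : nrm2 a = 1) (hb : nrm2 b = 1) :
    Complex.normSq (ip a b) ≤ 1 ∧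
      (Complex.normSq (ip a b) = 1 → b = scal (ip b a) a) := by
  set μ := ip b a with hμ
  have hnsq : Complex.normSq (ip a b) = Complex.normSq μ := normSq_ip_comm a b
  have hw : nrm2 (b - scal μ a) = 1 - Complex.normSq μ := by
    rw [nrm2_sub, nrm2_scal, ha, hb, ip_scal_right, ← hμ]
    have : (starRingEnd ℂ) μ * μ = (Complex.normSq μ : ℝ) := by
      rw [mul_comm]; exact Complex.mul_conj μ
    rw [this]
    simp
    ring
  constructor
  · rw [hnsq]
    nlinarith [nrm2_nonneg (b - scal μ a)]
  · intro h1
    rw [hnsq] at h1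
    have h0 : nrm2 (b - scal μ a) = 0 := by rw [hw, h1]; ring
    have := nrm2_zero_iff h0
    funext l
    have hl := congrFun this l
    simp only [Pi.sub_apply, Pi.zero_apply, sub_eq_zero] at hl
    exact hl


noncomputable def T (S : (Fin d → Fin n) → ℂ) (x : Fin d → Fin n → ℂ) : ℂ :=
  ∑ i : Fin d → Fin n, S i * ∏ k, x k (i k)

lemma T_perm (S : (Fin d → Fin n) → ℂ)
    (hS : ∀ (σ : Equiv.Perm (Fin d)) (i : Fin d → Fin n), S (i ∘ σ) = S i)
    (σ : Equiv.Perm (Fin d)) (x : Fin d → Fin n → ℂ) :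
    T S (fun m => x (σ m)) = T S x := by
  rw [T, T]
  refine Fintype.sum_equiv
    ⟨fun i => i ∘ σ.symm, fun i => i ∘ σ,
      fun i => by funext m; simp, fun i => by funext m; simp⟩ _ _ fun i => ?_
  simp only [Equiv.coe_fn_mk]
  rw [hS σ.symm i]
  congr 1
  rw [← Equiv.prod_comp σ (fun m => x m ((i ∘ ⇑σ.symm) m))]
  exact Finset.prod_congr rfl fun m _ => by simp

noncomputable def upd2 (x : Fin d → Fin n → ℂ) (j k : Fin d) (u v : Fin n → ℂ) :
    Fin d → Fin n → ℂ :=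
  Function.update (Function.update x j u) k v

lemma upd2_apply_j {x : Fin d → Fin n → ℂ} {j k : Fin d} (hjk : j ≠ k) (u v : Fin n → ℂ) :
    upd2 x j k u v j = u := by
  rw [upd2, Function.update_of_ne hjk, Function.update_self]

lemma upd2_apply_k {x : Fin d → Fin n → ℂ} {j k : Fin d} (u v : Fin n → ℂ) :
    upd2 x j k u v k = v := by
  rw [upd2, Function.update_self]

lemma upd2_apply_other {x : Fin d → Fin n → ℂ} {j k m : Fin d} (hm1 : m ≠ j) (hm2 : m ≠ k)
    (u v : Fin n → ℂ) : upd2 x j k u v m = x m := by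
  rw [upd2, Function.update_of_ne hm2, Function.update_of_ne hm1]

lemma upd2_self {x : Fin d → Fin n → ℂ} {j k : Fin d} : upd2 x j k (x j) (x k) = x := by
  rw [upd2, Function.update_eq_self, Function.update_eq_self]

lemma upd2_unit {x : Fin d → Fin n → ℂ} {j k : Fin d} (hjk : j ≠ k)
    {u v : Fin n → ℂ} (hx : ∀ m, nrm2 (x m) = 1) (hu : nrm2 u = 1) (hv : nrm2 v = 1) :
    ∀ m, nrm2 (upd2 x j k u v m) = 1 := by
  intro m
  rcases eq_or_ne m k with rfl | hk
  · rw [upd2_apply_k]; exact hv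
  rcases eq_or_ne m j with rfl | hj
  · rw [upd2_apply_j hjk]; exact hu
  · rw [upd2_apply_other hj hk]; exact hx m

lemma TR_eq (S : (Fin d → Fin n) → ℂ) {x : Fin d → Fin n → ℂ} {j k : Fin d} (hjk : j ≠ k)
    (u v : Fin n → ℂ) :
    T S (upd2 x j k u v)
      = ∑ i : Fin d → Fin n, S i * (u (i j) * v (i k) *
          ∏ m ∈ (univ.erase k).erase j, x m (i m)) := by
  rw [T]
  refine Finset.sum_congr rfl fun i _ => ?_
  congr 1
  have hk : k ∈ (univ : Finset (Fin d)) := mem_univ k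
  have hj : j ∈ (univ : Finset (Fin d)).erase k := mem_erase.mpr ⟨hjk, mem_univ j⟩
  rw [← Finset.mul_prod_erase univ _ hk, upd2_apply_k]
  rw [← Finset.mul_prod_erase _ _ hj, upd2_apply_j hjk]
  rw [show ∏ m ∈ (univ.erase k).erase j, upd2 x j k u v m (i m)
      = ∏ m ∈ (univ.erase k).erase j, x m (i m) from
    Finset.prod_congr rfl fun m hm => by
      rw [upd2_apply_other (mem_erase.mp hm).1 (mem_erase.mp (mem_erase.mp hm).2).1]]
  ring

lemma upd2_swap {x : Fin d → Fin n → ℂ} {j k : Fin d} (hjk : j ≠ k) (u v : Fin n → ℂ) :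
    (fun m => upd2 x j k u v (Equiv.swap j k m)) = upd2 x j k v u := by
  funext m
  rcases eq_or_ne m j with rfl | hj
  · rw [Equiv.swap_apply_left, upd2_apply_k, upd2_apply_j hjk]
  rcases eq_or_ne m k with rfl | hk
  · rw [Equiv.swap_apply_right, upd2_apply_j hjk, upd2_apply_k]
  · rw [Equiv.swap_apply_of_ne_of_ne hj hk, upd2_apply_other hj hk, upd2_apply_other hj hk]

lemma T_swap (S : (Fin d → Fin n) → ℂ)
    (hS : ∀ (σ : Equiv.Perm (Fin d)) (i : Fin d → Fin n), S (i ∘ σ) = S i)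
    {x : Fin d → Fin n → ℂ} {j k : Fin d} (hjk : j ≠ k) (u v : Fin n → ℂ) :
    T S (upd2 x j k u v) = T S (upd2 x j k v u) := by
  rw [← upd2_swap hjk u v, T_perm S hS]

lemma T_par (S : (Fin d → Fin n) → ℂ)
    (hS : ∀ (σ : Equiv.Perm (Fin d)) (i : Fin d → Fin n), S (i ∘ σ) = S i)
    {x : Fin d → Fin n → ℂ} {j k : Fin d} (hjk : j ≠ k) (u v : Fin n → ℂ) :
    T S (upd2 x j k (u + v) (u + v)) - T S (upd2 x j k (u - v) (u - v))
      = 4 * T S (upd2 x j k u v) := by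
  have h2 : T S (upd2 x j k (u + v) (u + v)) - T S (upd2 x j k (u - v) (u - v))
      = 2 * T S (upd2 x j k u v) + 2 * T S (upd2 x j k v u) := by
    rw [TR_eq S hjk, TR_eq S hjk, TR_eq S hjk, TR_eq S hjk,
      ← Finset.sum_sub_distrib, Finset.mul_sum, Finset.mul_sum, ← Finset.sum_add_distrib]
    refine Finset.sum_congr rfl fun i _ => ?_
    simp only [Pi.add_apply, Pi.sub_apply]
    ring
  rw [h2, ← T_swap S hS hjk u v]
  ring

lemma T_scal2 (S : (Fin d → Fin n) → ℂ) {x : Fin d → Fin n → ℂ} {j k : Fin d} (hjk : j ≠ k)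
    (c : ℂ) (w : Fin n → ℂ) :
    T S (upd2 x j k (scal c w) (scal c w)) = c ^ 2 * T S (upd2 x j k w w) := by
  rw [TR_eq S hjk, TR_eq S hjk, Finset.mul_sum]
  refine Finset.sum_congr rfl fun i _ => ?_
  simp only [scal]
  ring


noncomputable def Psi (x : Fin d → Fin n → ℂ) : ℝ :=
  ∑ j, ∑ k, Complex.normSq (ip (x j) (x k))

lemma sum_split {M : Type*} [AddCommMonoid M] {j k : Fin d} (hjk : j ≠ k) (g : Fin d → M) :
    ∑ m, g m = g j + g k + ∑ t ∈ (univ.erase j).erase k, g t := by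
  have h1 : ∑ m, g m = g j + ∑ t ∈ univ.erase j, g t :=
    (Finset.add_sum_erase _ g (mem_univ j)).symm
  have h2 : ∑ t ∈ univ.erase j, g t = g k + ∑ t ∈ (univ.erase j).erase k, g t :=
    (Finset.add_sum_erase _ g (mem_erase.mpr ⟨Ne.symm hjk, mem_univ k⟩)).symm
  rw [h1, h2, ← add_assoc]

lemma Psi_decomp {j k : Fin d} (hjk : j ≠ k) (y : Fin d → Fin n → ℂ) :
    Psi y = (Complex.normSq (ip (y j) (y j)) + Complex.normSq (ip (y j) (y k))
        + Complex.normSq (ip (y k) (y j)) + Complex.normSq (ip (y k) (y k)))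
      + (∑ t ∈ (univ.erase j).erase k,
          (Complex.normSq (ip (y j) (y t)) + Complex.normSq (ip (y k) (y t))
            + Complex.normSq (ip (y t) (y j)) + Complex.normSq (ip (y t) (y k))))
      + ∑ t ∈ (univ.erase j).erase k, ∑ t' ∈ (univ.erase j).erase k,
          Complex.normSq (ip (y t) (y t')) := by
  rw [Psi, sum_split hjk (fun j' => ∑ k', Complex.normSq (ip (y j') (y k')))]
  rw [sum_split hjk (fun k' => Complex.normSq (ip (y j) (y k')))]
  rw [sum_split hjk (fun k' => Complex.normSq (ip (y k) (y k')))]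
  rw [show (∑ t ∈ (univ.erase j).erase k, ∑ k', Complex.normSq (ip (y t) (y k')))
      = ∑ t ∈ (univ.erase j).erase k,
          (Complex.normSq (ip (y t) (y j)) + Complex.normSq (ip (y t) (y k))
            + ∑ t' ∈ (univ.erase j).erase k, Complex.normSq (ip (y t) (y t'))) from
    Finset.sum_congr rfl fun t _ => sum_split hjk _]
  rw [Finset.sum_add_distrib, Finset.sum_add_distrib]
  rw [show (∑ t ∈ (univ.erase j).erase k,
      (Complex.normSq (ip (y j) (y t)) + Complex.normSq (ip (y k) (y t))
        + Complex.normSq (ip (y t) (y j)) + Complex.normSq (ip (y t) (y k))))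
      = ((∑ t ∈ (univ.erase j).erase k, Complex.normSq (ip (y j) (y t)))
        + ∑ t ∈ (univ.erase j).erase k, Complex.normSq (ip (y k) (y t)))
        + (∑ t ∈ (univ.erase j).erase k, Complex.normSq (ip (y t) (y j)))
        + ∑ t ∈ (univ.erase j).erase k, Complex.normSq (ip (y t) (y k)) from by
    rw [Finset.sum_add_distrib, Finset.sum_add_distrib, Finset.sum_add_distrib]]
  ring

end Stmt8

open Stmt8 Finset in
/-- Banach's theorem: the spectral norm of a symmetric tensor, a supremum
over d-tuples of unit vectors, equals the supremum over rank-one symmetric tensors. -/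
theorem stmt_8 (n d : ℕ) (hn : 1 ≤ n) (hd : 1 ≤ d)
    (S : (Fin d → Fin n) → ℂ)
    (hS : ∀ (σ : Equiv.Perm (Fin d)) (i : Fin d → Fin n), S (i ∘ σ) = S i) :
    sSup {r : ℝ | ∃ x : Fin d → Fin n → ℂ,
        (∀ k, (∑ l, ‖x k l‖ ^ 2) = 1) ∧
        r = ‖∑ i : Fin d → Fin n, S i * ∏ k, x k (i k)‖} =
    sSup {r : ℝ | ∃ y : Fin n → ℂ, (∑ l, ‖y l‖ ^ 2) = 1 ∧
        r = ‖∑ i : Fin d → Fin n, S i * ∏ k, y (i k)‖} := by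
  classical
  -- continuity facts
  have hT_cont : Continuous (T S) := by
    apply continuous_finset_sum
    intro i _
    exact continuous_const.mul
      (continuous_finset_prod _ fun k _ => (continuous_apply (i k)).comp (continuous_apply k))
  have hf_cont : Continuous (fun x => ‖T S x‖) :=
    continuous_norm.comp hT_cont
  have hPsi_cont : Continuous (Psi (n := n) (d := d)) := by
    apply continuous_finset_sum
    intro j _
    apply continuous_finset_sum
    intro k _
    refine Complex.continuous_normSq.comp ?_
    apply continuous_finset_sum
    intro l _
    show Continuous fun x : Fin d → Fin n → ℂ => x j l * (starRingEnd ℂ) (x k l)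
    fun_prop
  -- the feasible set
  set A : Set (Fin d → Fin n → ℂ) := {x | ∀ m, nrm2 (x m) = 1} with hA
  have hA_closed : IsClosed A := by
    have : A = ⋂ m, {x : Fin d → Fin n → ℂ | nrm2 (x m) = 1} := by
      ext x; simp [hA, Set.mem_iInter]
    rw [this]
    refine isClosed_iInter fun m => isClosed_eq ?_ continuous_const
    apply continuous_finset_sum
    intro l _
    exact Complex.continuous_normSq.comp ((continuous_apply l).comp (continuous_apply m))
  have hA_bdd : Bornology.IsBounded A := by
    refine (Metric.isBounded_closedBall (x := (0 : Fin d → Fin n → ℂ)) (r := 1)).subset ?_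
    intro x hx
    rw [Metric.mem_closedBall, dist_zero_right]
    rw [pi_norm_le_iff_of_nonneg zero_le_one]
    intro k
    rw [pi_norm_le_iff_of_nonneg zero_le_one]
    intro l
    have h2 : Complex.normSq (x k l) ≤ 1 := by
      have : nrm2 (x k) = 1 := hx k
      calc Complex.normSq (x k l) ≤ nrm2 (x k) :=
            Finset.single_le_sum (fun i _ => Complex.normSq_nonneg (x k i)) (mem_univ l)
        _ = 1 := this
    rw [Complex.norm_def]
    exact Real.sqrt_le_one.mpr h2
  have hA_ne : A.Nonempty := by
    refine ⟨fun _ => fun l => if l = ⟨0, hn⟩ then 1 else 0, ?_⟩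
    intro m
    simp [nrm2, apply_ite Complex.normSq, Finset.sum_ite_eq']
  have hA_cpt : IsCompact A := Metric.isCompact_of_isClosed_isBounded hA_closed hA_bdd
  obtain ⟨x0, hx0A, hx0max⟩ := hA_cpt.exists_isMaxOn hA_ne hf_cont.continuousOn
  set L : ℝ := ‖T S x0‖ with hL
  have hub : ∀ y, (∀ m, nrm2 (y m) = 1) → ‖T S y‖ ≤ L := fun y hy => hx0max hy
  -- the set of maximizers
  set K : Set (Fin d → Fin n → ℂ) := A ∩ {x | ‖T S x‖ = L} with hK
  have hK_cpt : IsCompact K := hA_cpt.inter_right (isClosed_eq hf_cont continuous_const)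
  have hK_ne : K.Nonempty := ⟨x0, hx0A, rfl⟩
  obtain ⟨z, hzK, hzmax⟩ := hK_cpt.exists_isMaxOn hK_ne hPsi_cont.continuousOn
  have hzA : ∀ m, nrm2 (z m) = 1 := hzK.1
  have hzL : ‖T S z‖ = L := hzK.2
  -- key claim: all pairs of slots of the maximizer are parallel
  have key : ∀ j k : Fin d, j ≠ k → Complex.normSq (ip (z j) (z k)) = 1 := by
    intro j k hjk
    by_contra hne
    have hle := (cs (hzA j) (hzA k)).1
    have hlt : Complex.normSq (ip (z j) (z k)) < 1 := lt_of_le_of_ne hle hne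
    set c : ℂ := ip (z j) (z k) with hc
    have hre2 : c.re ^ 2 + c.im ^ 2 < 1 := by
      have := hlt
      rw [Complex.normSq_apply] at this
      nlinarith
    have hre : |c.re| < 1 := by
      nlinarith [sq_abs c.re, sq_nonneg c.im, abs_nonneg c.re]
    have hre' := abs_lt.mp hre
    set p : Fin n → ℂ := z j + z k with hp
    set m' : Fin n → ℂ := z j - z k with hm'
    have hnp2 : nrm2 p = 2 + 2 * c.re := by
      rw [hp, nrm2_add, hzA j, hzA k, ← hc]; ring
    have hnm2 : nrm2 m' = 2 - 2 * c.re := by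
      rw [hm', nrm2_sub, hzA j, hzA k, ← hc]; ring
    have hnppos : 0 < nrm2 p := by rw [hnp2]; linarith [hre'.1]
    have hnmpos : 0 < nrm2 m' := by rw [hnm2]; linarith [hre'.2]
    set rp := Real.sqrt (nrm2 p) with hrp
    set rq := Real.sqrt (nrm2 m') with hrq
    have hrppos : 0 < rp := Real.sqrt_pos.mpr hnppos
    have hrqpos : 0 < rq := Real.sqrt_pos.mpr hnmpos
    have hrpsq : rp * rp = nrm2 p := Real.mul_self_sqrt hnppos.le
    have hrqsq : rq * rq = nrm2 m' := Real.mul_self_sqrt hnmpos.le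
    set s : Fin n → ℂ := scal ((rp⁻¹ : ℝ) : ℂ) p with hs
    set q : Fin n → ℂ := scal ((rq⁻¹ : ℝ) : ℂ) m' with hq
    have hs_unit : nrm2 s = 1 := by
      rw [hs, nrm2_scal, Complex.normSq_ofReal]
      field_simp
      rw [sq]; exact hrpsq.symm
    have hq_unit : nrm2 q = 1 := by
      rw [hq, nrm2_scal, Complex.normSq_ofReal]
      field_simp
      rw [sq]; exact hrqsq.symm
    have hps : p = scal ((rp : ℝ) : ℂ) s := by
      funext l
      rw [hs]
      simp only [scal]
      rw [← mul_assoc, ← Complex.ofReal_mul, mul_inv_cancel₀ hrppos.ne']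
      simp
    have hqs : m' = scal ((rq : ℝ) : ℂ) q := by
      funext l
      rw [hq]
      simp only [scal]
      rw [← mul_assoc, ← Complex.ofReal_mul, mul_inv_cancel₀ hrqpos.ne']
      simp
    -- abs values of the two merged candidates
    have hT2p : T S (upd2 z j k p p) = ((rp : ℝ) : ℂ) ^ 2 * T S (upd2 z j k s s) := by
      conv_lhs => rw [hps]
      rw [T_scal2 S hjk]
    have habsTp : ‖T S (upd2 z j k p p)‖
        = nrm2 p * ‖T S (upd2 z j k s s)‖ := by
      rw [hT2p, norm_mul, norm_pow, Complex.norm_real, Real.norm_eq_abs, abs_of_pos hrppos, sq, hrpsq]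
    have hT2q : T S (upd2 z j k m' m') = ((rq : ℝ) : ℂ) ^ 2 * T S (upd2 z j k q q) := by
      conv_lhs => rw [hqs]
      rw [T_scal2 S hjk]
    have habsTq : ‖T S (upd2 z j k m' m')‖
        = nrm2 m' * ‖T S (upd2 z j k q q)‖ := by
      rw [hT2q, norm_mul, norm_pow, Complex.norm_real, Real.norm_eq_abs, abs_of_pos hrqpos, sq, hrqsq]
    have hTs_le : ‖T S (upd2 z j k s s)‖ ≤ L :=
      hub _ (upd2_unit hjk hzA hs_unit hs_unit)
    have hTq_le : ‖T S (upd2 z j k q q)‖ ≤ L :=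
      hub _ (upd2_unit hjk hzA hq_unit hq_unit)
    -- parallelogram identity forces both candidates to be maximizers
    have hpar : T S (upd2 z j k p p) - T S (upd2 z j k m' m') = 4 * T S z := by
      have h := T_par (x := z) S hS hjk (z j) (z k)
      rw [upd2_self] at h
      exact h
    have h4L : 4 * L ≤ ‖T S (upd2 z j k p p)‖
        + ‖T S (upd2 z j k m' m')‖ := by
      have h1 : (4 : ℝ) * L = ‖4 * T S z‖ := by
        rw [norm_mul, hzL]
        norm_num
      rw [h1, ← hpar]
      have := norm_sub_le (T S (upd2 z j k p p)) (T S (upd2 z j k m' m'))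
      simpa using this
    have hsum4 : nrm2 p + nrm2 m' = 4 := by rw [hnp2, hnm2]; ring
    have hLnonneg : 0 ≤ L := hL ▸ norm_nonneg _
    have h3L : 4 * L = nrm2 p * L + nrm2 m' * L := by rw [← hsum4]; ring
    have heqs : ‖T S (upd2 z j k s s)‖ = L := by
      refine le_antisymm hTs_le ?_
      by_contra hAs
      push_neg at hAs
      have h5 : nrm2 p * ‖T S (upd2 z j k s s)‖ < nrm2 p * L :=
        mul_lt_mul_of_pos_left hAs hnppos
      have h6 : nrm2 m' * ‖T S (upd2 z j k q q)‖ ≤ nrm2 m' * L :=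
        mul_le_mul_of_nonneg_left hTq_le hnmpos.le
      linarith [habsTp, habsTq, h4L]
    have heqq : ‖T S (upd2 z j k q q)‖ = L := by
      refine le_antisymm hTq_le ?_
      by_contra hAq
      push_neg at hAq
      have h5 : nrm2 m' * ‖T S (upd2 z j k q q)‖ < nrm2 m' * L :=
        mul_lt_mul_of_pos_left hAq hnmpos
      have h6 : nrm2 p * ‖T S (upd2 z j k s s)‖ ≤ nrm2 p * L :=
        mul_le_mul_of_nonneg_left hTs_le hnppos.le
      linarith [habsTp, habsTq, h4L]
    have hKs : upd2 z j k s s ∈ K := ⟨upd2_unit hjk hzA hs_unit hs_unit, heqs⟩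
    have hKq : upd2 z j k q q ∈ K := ⟨upd2_unit hjk hzA hq_unit hq_unit, heqq⟩
    -- cross-term bookkeeping
    set E : Finset (Fin d) := (univ.erase j).erase k with hE
    set Xc : ℝ := ∑ t ∈ E, (2 * Complex.normSq (ip (z j) (z t))
      + 2 * Complex.normSq (ip (z k) (z t))) with hXc
    have hident : nrm2 p * (∑ t ∈ E, Complex.normSq (ip s (z t)))
        + nrm2 m' * (∑ t ∈ E, Complex.normSq (ip q (z t))) = Xc := by
      rw [Finset.mul_sum, Finset.mul_sum, ← Finset.sum_add_distrib, hXc]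
      refine Finset.sum_congr rfl fun t _ => ?_
      rw [hs, hq, ip_scal_left, ip_scal_left, Complex.normSq_mul, Complex.normSq_mul,
        Complex.normSq_ofReal, Complex.normSq_ofReal]
      rw [hp, hm', ip_add_left, ip_sub_left]
      have hpar2 := sq_par (ip (z j) (z t)) (ip (z k) (z t))
      have e1 : nrm2 p * (rp⁻¹ * rp⁻¹ * Complex.normSq (ip (z j) (z t) + ip (z k) (z t)))
          = Complex.normSq (ip (z j) (z t) + ip (z k) (z t)) := by
        rw [← hrpsq]
        field_simp
      have e2 : nrm2 m' * (rq⁻¹ * rq⁻¹ * Complex.normSq (ip (z j) (z t) - ip (z k) (z t)))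
          = Complex.normSq (ip (z j) (z t) - ip (z k) (z t)) := by
        rw [← hrqsq]
        field_simp
      rw [e1, e2]
      linarith [hpar2]
    -- the final contradiction, for whichever candidate wins
    have final : ∀ w : Fin n → ℂ, nrm2 w = 1 → upd2 z j k w w ∈ K →
        Xc ≤ 4 * ∑ t ∈ E, Complex.normSq (ip w (z t)) → False := by
      intro w hw1 hwK hwX
      have hEmem : ∀ t ∈ E, t ≠ j ∧ t ≠ k := by
        intro t ht
        rw [hE] at ht
        exact ⟨(mem_erase.mp (mem_erase.mp ht).2).1, (mem_erase.mp ht).1⟩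
      have hupdt : ∀ t ∈ E, upd2 z j k w w t = z t := fun t ht =>
        upd2_apply_other (hEmem t ht).1 (hEmem t ht).2 w w
      have hPsiw : Psi (upd2 z j k w w)
          = 4 + (∑ t ∈ E, 4 * Complex.normSq (ip w (z t)))
            + ∑ t ∈ E, ∑ t' ∈ E, Complex.normSq (ip (z t) (z t')) := by
        rw [Psi_decomp hjk]
        simp only [upd2_apply_j hjk, upd2_apply_k]
        rw [show ∑ t ∈ E, (Complex.normSq (ip w (upd2 z j k w w t))
              + Complex.normSq (ip w (upd2 z j k w w t))
              + Complex.normSq (ip (upd2 z j k w w t) w)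
              + Complex.normSq (ip (upd2 z j k w w t) w))
            = ∑ t ∈ E, 4 * Complex.normSq (ip w (z t)) from
          Finset.sum_congr rfl fun t ht => by
            rw [hupdt t ht, normSq_ip_comm (z t) w]; ring]
        rw [show (∑ t ∈ E, ∑ t' ∈ E,
              Complex.normSq (ip (upd2 z j k w w t) (upd2 z j k w w t')))
            = ∑ t ∈ E, ∑ t' ∈ E, Complex.normSq (ip (z t) (z t')) from
          Finset.sum_congr rfl fun t ht => Finset.sum_congr rfl fun t' ht' => by
            rw [hupdt t ht, hupdt t' ht']]
        rw [ip_self w, hw1]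
        norm_num
      have hPsiz : Psi z
          = (2 + 2 * Complex.normSq c) + Xc
            + ∑ t ∈ E, ∑ t' ∈ E, Complex.normSq (ip (z t) (z t')) := by
        rw [Psi_decomp hjk]
        rw [show ∑ t ∈ E, (Complex.normSq (ip (z j) (z t)) + Complex.normSq (ip (z k) (z t))
              + Complex.normSq (ip (z t) (z j)) + Complex.normSq (ip (z t) (z k)))
            = Xc from by
          rw [hXc]
          refine Finset.sum_congr rfl fun t ht => ?_
          rw [normSq_ip_comm (z t) (z j), normSq_ip_comm (z t) (z k)]; ring]
        rw [ip_self (z j), ip_self (z k), hzA j, hzA k, ← hc,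
          normSq_ip_comm (z k) (z j), ← hc]
        norm_num
        ring
      have hcmp : Psi (upd2 z j k w w) ≤ Psi z := hzmax hwK
      rw [hPsiw, hPsiz] at hcmp
      rw [Finset.mul_sum] at hwX
      linarith [hlt]
    rcases le_or_gt Xc (4 * ∑ t ∈ E, Complex.normSq (ip s (z t))) with hw | hw
    · exact final s hs_unit hKs hw
    · refine final q hq_unit hKq ?_
      have h7 : (nrm2 p + nrm2 m') * Xc = 4 * Xc := by rw [hsum4]
      nlinarith [hident, hnmpos, mul_pos hnppos (sub_pos.mpr hw), h7]
  -- conclusion: the maximizer is a symmetric rank-one point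
  obtain ⟨j0⟩ : Nonempty (Fin d) := ⟨⟨0, hd⟩⟩
  have hdiag : ∀ kk, z kk = scal (ip (z kk) (z j0)) (z j0) := by
    intro kk
    by_cases hk : kk = j0
    · subst hk
      rw [ip_self, hzA]
      funext l
      simp [scal]
    · exact (cs (hzA j0) (hzA kk)).2 (key j0 kk (fun h => hk h.symm))
  have hμabs : ∀ kk, ‖ip (z kk) (z j0)‖ = 1 := by
    intro kk
    have hnsq : Complex.normSq (ip (z kk) (z j0)) = 1 := by
      by_cases hk : kk = j0
      · subst hk
        rw [ip_self, hzA]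
        norm_num
      · rw [normSq_ip_comm]
        exact key j0 kk (fun h => hk h.symm)
    rw [Complex.norm_def, hnsq, Real.sqrt_one]
  have hTdiag : T S z = (∏ kk, ip (z kk) (z j0)) * T S (fun _ => z j0) := by
    rw [T, T, Finset.mul_sum]
    refine Finset.sum_congr rfl fun i _ => ?_
    rw [show ∏ kk, z kk (i kk) = ∏ kk, (ip (z kk) (z j0) * z j0 (i kk)) from
      Finset.prod_congr rfl fun kk _ => by
        conv_lhs => rw [hdiag kk]
        rfl]
    rw [Finset.prod_mul_distrib]
    ring
  have hdiag_abs : ‖T S (fun _ => z j0)‖ = L := by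
    rw [← hzL, hTdiag, norm_mul, norm_prod]
    rw [Finset.prod_congr rfl (fun kk _ => hμabs kk), Finset.prod_const_one, one_mul]
  -- wrap up via greatest elements
  have hG1 : IsGreatest {r : ℝ | ∃ x : Fin d → Fin n → ℂ,
      (∀ k, (∑ l, ‖x k l‖ ^ 2) = 1) ∧
      r = ‖∑ i : Fin d → Fin n, S i * ∏ k, x k (i k)‖} L := by
    constructor
    · exact ⟨x0, fun k => by rw [← nrm2_eq_sum_abs]; exact hx0A k, by rw [hL, T]⟩
    · rintro r ⟨x, hx1, rfl⟩
      exact hub x fun m => by rw [nrm2_eq_sum_abs]; exact hx1 m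
  have hG2 : IsGreatest {r : ℝ | ∃ y : Fin n → ℂ,
      (∑ l, ‖y l‖ ^ 2) = 1 ∧
      r = ‖∑ i : Fin d → Fin n, S i * ∏ k, y (i k)‖} L := by
    constructor
    · refine ⟨z j0, by rw [← nrm2_eq_sum_abs]; exact hzA j0, ?_⟩
      rw [← hdiag_abs, T]
    · rintro r ⟨y, hy1, rfl⟩
      exact hub (fun _ => y) fun m => by rw [nrm2_eq_sum_abs]; exact hy1
  rw [hG1.csSup_eq, hG2.csSup_eq]
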